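/- Correctness of the spawning automaton construction: for every LTL^FO sentence φ, the constructed spawning automaton A_φ satisfies L(A_φ) = L(φ), i.e., A_φ has an accepting run over a first-order temporal structure (𝔄̄, w) (with w an infinite trace of events) if and only if (𝔄̄, w) ⊨ φ. -/

import Mathlib

/-!
LTL^FO: a first-order temporal logic.  One-sorted signatures with function
symbols, uninterpreted predicate symbols (U-operators, interpreted via the
trace) and interpreted predicate symbols (I-operators), terms, formulae,
first-order temporal structures, and the satisfaction relation in which
quantifiers range over the actions of the current event.
-/

namespace LTLFO

/-- A (one-sorted) signature: function symbols `Func`, uninterpreted predicate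
symbols `UPred` and interpreted predicate symbols `IPred`, with their arities. -/
structure Sig : Type 1 where
  Func : Type
  arF : Func → ℕ
  UPred : Type
  arU : UPred → ℕ
  IPred : Type
  arI : IPred → ℕ

/-- Terms over a signature, built from variables (named by naturals) and
function symbols. -/
inductive Tm (s : Sig) : Type where
  | var (x : ℕ) : Tm s
  | func (f : s.Func) (args : Fin (s.arF f) → Tm s) : Tm s

/-- LTL^FO formulae:
`φ ::= ⊤ | p(t⃗) | r(t⃗) | ¬φ | φ∧φ | Xφ | φUφ | ∀(x₁,…,xₙ):p. φ`. -/
inductive FOForm (s : Sig) : Type where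
  | tt : FOForm s
  | uatom (p : s.UPred) (ts : Fin (s.arU p) → Tm s) : FOForm s
  | iatom (r : s.IPred) (ts : Fin (s.arI r) → Tm s) : FOForm s
  | neg (φ : FOForm s) : FOForm s
  | and (φ ψ : FOForm s) : FOForm s
  | next (φ : FOForm s) : FOForm s
  | until_ (φ ψ : FOForm s) : FOForm s
  | forall_ (p : s.UPred) (xs : Fin (s.arU p) → ℕ) (φ : FOForm s) : FOForm s

/-- An action `(p, d⃗)`: a U-operator together with a matching tuple of domain values. -/
abbrev Action (s : Sig) (D : Type) : Type := Σ p : s.UPred, (Fin (s.arU p) → D)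

variable {s : Sig} {D : Type}

/-- Evaluation of a term in a domain `D`, given an interpretation of the function
symbols and a valuation of the variables. -/
def Tm.eval (fI : (f : s.Func) → (Fin (s.arF f) → D) → D) (v : ℕ → D) : Tm s → D
  | .var x => v x
  | .func f a => fI f (fun k => Tm.eval fI v (a k))

/-- Update a valuation `v` by binding the variables `xs k` to the values `d k`
(i.e. `v ∪ {x₁ ↦ d₁, …, xₙ ↦ dₙ}`). -/
def updVec {n : ℕ} (v : ℕ → D) (xs : Fin n → ℕ) (d : Fin n → D) : ℕ → D :=
  fun x =>
    match (List.finRange n).find? (fun k => xs k == x) with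
    | some k => d k
    | none => v x

/-- An (infinite) first-order temporal structure `(𝔄̄, w)` over a fixed domain `D`:
a rigid interpretation of the function symbols, a per-position interpretation of
the I-operators, and a trace of events (finite sets of actions). -/
structure TStruct (s : Sig) (D : Type) : Type where
  funcI : (f : s.Func) → (Fin (s.arF f) → D) → D
  predI : ℕ → (r : s.IPred) → (Fin (s.arI r) → D) → Prop
  trace : ℕ → Set (Action s D)
  finEv : ∀ i, (trace i).Finite

/-- The satisfaction relation `(𝔄̄, w, v, i) ⊨ φ` (infinite-trace semantics).
Quantifiers range over the actions of the current event. -/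
def Sat (M : TStruct s D) : FOForm s → (ℕ → D) → ℕ → Prop
  | .tt, _, _ => True
  | .uatom p ts, v, i => (⟨p, fun k => Tm.eval M.funcI v (ts k)⟩ : Action s D) ∈ M.trace i
  | .iatom r ts, v, i => M.predI i r (fun k => Tm.eval M.funcI v (ts k))
  | .neg φ, v, i => ¬ Sat M φ v i
  | .and φ ψ, v, i => Sat M φ v i ∧ Sat M ψ v i
  | .next φ, v, i => Sat M φ v (i + 1)
  | .until_ φ ψ, v, i => ∃ k, i ≤ k ∧ Sat M ψ v k ∧ ∀ j, i ≤ j → j < k → Sat M φ v j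
  | .forall_ p xs φ, v, i =>
      ∀ d : Fin (s.arU p) → D, (⟨p, d⟩ : Action s D) ∈ M.trace i → Sat M φ (updVec v xs d) i

/-- The variables occurring in a term. -/
def Tm.vars : Tm s → Set ℕ
  | .var x => {x}
  | .func _ a => ⋃ k, Tm.vars (a k)

/-- The free variables of a formula. -/
def FOForm.fv : FOForm s → Set ℕ
  | .tt => ∅
  | .uatom _ ts => ⋃ k, Tm.vars (ts k)
  | .iatom _ ts => ⋃ k, Tm.vars (ts k)
  | .neg φ => FOForm.fv φ
  | .and φ ψ => FOForm.fv φ ∪ FOForm.fv ψ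
  | .next φ => FOForm.fv φ
  | .until_ φ ψ => FOForm.fv φ ∪ FOForm.fv ψ
  | .forall_ _ xs φ => FOForm.fv φ \ Set.range xs

/-- A sentence is a formula without free variables. -/
def FOForm.Closed (φ : FOForm s) : Prop := FOForm.fv φ = ∅

/-- An LTL^FO sentence is satisfiable iff some first-order temporal structure
(over some nonempty domain) satisfies it at position 0. -/
def FOSatisfiable (s : Sig) (φ : FOForm s) : Prop :=
  ∃ (D : Type) (_ : Nonempty D) (M : TStruct s D) (v : ℕ → D), Sat M φ v 0

end LTLFO

namespace LTLFO

variable {s : Sig} {D : Type}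

/-- The quantifier depth of a formula (the level of its spawning automaton). -/
def depthFO : FOForm s → ℕ
  | .tt => 0
  | .uatom _ _ => 0
  | .iatom _ _ => 0
  | .neg φ => depthFO φ
  | .and φ ψ => max (depthFO φ) (depthFO ψ)
  | .next φ => depthFO φ
  | .until_ φ ψ => max (depthFO φ) (depthFO ψ)
  | .forall_ _ _ φ => depthFO φ + 1

/-- The restricted subformula function `sf|∀`, treating quantified subformulae as
atomic. -/
def sfA : FOForm s → Set (FOForm s)
  | .tt => {.tt}
  | .uatom p ts => {.uatom p ts}
  | .iatom r ts => {.iatom r ts}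
  | .neg φ => insert (.neg φ) (sfA φ)
  | .and φ ψ => insert (.and φ ψ) (sfA φ ∪ sfA ψ)
  | .next φ => insert (.next φ) (sfA φ)
  | .until_ φ ψ => insert (.until_ φ ψ) (sfA φ ∪ sfA ψ)
  | .forall_ p xs φ => {.forall_ p xs φ}

/-- The closure `cl(φ)`: the smallest set containing `sf|∀(φ)` closed under negation. -/
def cl (φ : FOForm s) : Set (FOForm s) := sfA φ ∪ (FOForm.neg '' sfA φ)

/-- A complete subset of `cl(φ)` (a state of the spawning automaton `A_φ`). -/
def Complete (φ : FOForm s) (q : Set (FOForm s)) : Prop :=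
  q ⊆ cl φ ∧
  (∀ ψ ∈ sfA φ, (ψ ∈ q ∨ FOForm.neg ψ ∈ q) ∧ ¬ (ψ ∈ q ∧ FOForm.neg ψ ∈ q)) ∧
  (∀ ψ ψ', FOForm.and ψ ψ' ∈ cl φ → (FOForm.and ψ ψ' ∈ q ↔ (ψ ∈ q ∧ ψ' ∈ q))) ∧
  (∀ ψ ψ', FOForm.until_ ψ ψ' ∈ cl φ →
    ((FOForm.until_ ψ ψ' ∈ q → (ψ' ∈ q ∨ ψ ∈ q)) ∧
      (FOForm.until_ ψ ψ' ∉ q → ψ' ∉ q)))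

/-- Definedness condition of `δ→` at a state `q` on the `i`-th input `(𝔄ᵢ, wᵢ)`:
all (possibly negated) atomic formulae of `q` are (respectively not) true there. -/
def AtomsOK (M : TStruct s D) (v : ℕ → D) (i : ℕ) (q : Set (FOForm s)) : Prop :=
  (FOForm.neg FOForm.tt ∉ q) ∧
  (∀ p ts, FOForm.uatom p ts ∈ q →
    (⟨p, fun k => Tm.eval M.funcI v (ts k)⟩ : Action s D) ∈ M.trace i) ∧
  (∀ p ts, FOForm.neg (FOForm.uatom p ts) ∈ q →
    (⟨p, fun k => Tm.eval M.funcI v (ts k)⟩ : Action s D) ∉ M.trace i) ∧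
  (∀ r ts, FOForm.iatom r ts ∈ q → M.predI i r (fun k => Tm.eval M.funcI v (ts k))) ∧
  (∀ r ts, FOForm.neg (FOForm.iatom r ts) ∈ q →
    ¬ M.predI i r (fun k => Tm.eval M.funcI v (ts k)))

/-- The transition relation `q' ∈ δ→(q, (𝔄ᵢ, wᵢ))` of `A_{φ,v}`. -/
def Step (φ : FOForm s) (M : TStruct s D) (v : ℕ → D) (i : ℕ)
    (q q' : Set (FOForm s)) : Prop :=
  AtomsOK M v i q ∧
  (∀ ψ, FOForm.next ψ ∈ cl φ → (FOForm.next ψ ∈ q ↔ ψ ∈ q')) ∧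
  (∀ ψ ψ', FOForm.until_ ψ ψ' ∈ cl φ →
    (FOForm.until_ ψ ψ' ∈ q ↔ (ψ' ∈ q ∨ (ψ ∈ q ∧ FOForm.until_ ψ ψ' ∈ q'))))

/-- A run of `A_{φ,v}` over `(𝔄̄, w)`: a sequence of complete states starting in an
initial state (one containing `φ`) and respecting `δ→`. -/
def IsRun (φ : FOForm s) (M : TStruct s D) (v : ℕ → D) (ρ : ℕ → Set (FOForm s)) : Prop :=
  (∀ i, Complete φ (ρ i)) ∧ φ ∈ ρ 0 ∧ ∀ i, Step φ M v i (ρ i) (ρ (i + 1))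

/-- Local (generalized Büchi) acceptance: for each `ψUψ' ∈ cl(φ)`, the set
`F_{ψUψ'} = {q | ψ' ∈ q ∨ ¬(ψUψ') ∈ q}` is visited infinitely often. -/
def LocallyAccepting (φ : FOForm s) (ρ : ℕ → Set (FOForm s)) : Prop :=
  ∀ ψ ψ', FOForm.until_ ψ ψ' ∈ cl φ →
    ∀ N, ∃ i, N ≤ i ∧ (ψ' ∈ ρ i ∨ FOForm.neg (FOForm.until_ ψ ψ') ∈ ρ i)

/-- The suffix `(𝔄̄ⁱ, wⁱ)` of a first-order temporal structure. -/
def TStruct.shift (M : TStruct s D) (i : ℕ) : TStruct s D where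
  funcI := M.funcI
  predI := fun j => M.predI (i + j)
  trace := fun j => M.trace (i + j)
  finEv := fun j => M.finEv (i + j)

/-- Acceptance for spawning automata `A_{φ,v}` of level at most `n`, by recursion on
the level: a run is accepting if it is a locally accepting run and, at every position
`i`, the spawning obligation `δ↓(ρ(i), (𝔄ᵢ, wᵢ))` is satisfiable by a set of spawned
automata all of which have an accepting run over the suffix `(𝔄̄ⁱ, wⁱ)`:
for every `∀x⃗:p.ψ ∈ ρ(i)` and every action `(p, d⃗) ∈ wᵢ` the automaton
`A_{ψ, v∪{x⃗↦d⃗}}` must accept, and for every `¬∀x⃗:p.ψ ∈ ρ(i)` some action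
`(p, d⃗) ∈ wᵢ` must give an accepting `A_{¬ψ, v∪{x⃗↦d⃗}}`.  (At level `0` the
spawning function is constantly `⊤`.) -/
def AcceptingAux : ℕ → TStruct s D → FOForm s → (ℕ → D) → (ℕ → Set (FOForm s)) → Prop
  | 0, M, φ, v, ρ => IsRun φ M v ρ ∧ LocallyAccepting φ ρ
  | n + 1, M, φ, v, ρ =>
      IsRun φ M v ρ ∧ LocallyAccepting φ ρ ∧
      ∀ i : ℕ,
        (∀ p xs ψ, FOForm.forall_ p xs ψ ∈ ρ i →
          ∀ d : Fin (s.arU p) → D, (⟨p, d⟩ : Action s D) ∈ M.trace i →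
            ∃ ρ', AcceptingAux n (M.shift i) ψ (updVec v xs d) ρ') ∧
        (∀ p xs ψ, FOForm.neg (FOForm.forall_ p xs ψ) ∈ ρ i →
          ∃ d : Fin (s.arU p) → D, (⟨p, d⟩ : Action s D) ∈ M.trace i ∧
            ∃ ρ', AcceptingAux n (M.shift i) (FOForm.neg ψ) (updVec v xs d) ρ')

/-- `ρ` is an accepting run of the spawning automaton `A_{φ,v}` (whose level is the
quantifier depth of `φ`) over the first-order temporal structure `M = (𝔄̄, w)`. -/
def Accepting (M : TStruct s D) (φ : FOForm s) (v : ℕ → D)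
    (ρ : ℕ → Set (FOForm s)) : Prop :=
  AcceptingAux (depthFO φ) M φ v ρ

end LTLFO

namespace LTLFO

section Aux

variable {s : Sig} {D : Type}

/-- Every formula is among its restricted subformulae. -/
lemma sfA_self (φ : FOForm s) : φ ∈ sfA φ := by
  cases φ <;> simp [sfA]

/-- Transitivity of the restricted subformula relation. -/
lemma sfA_trans : ∀ (φ ψ : FOForm s), ψ ∈ sfA φ → sfA ψ ⊆ sfA φ := by
  intro φ
  induction φ with
  | tt => intro ψ h; simp [sfA] at h; subst h; exact subset_rfl
  | uatom p ts => intro ψ h; simp [sfA] at h; subst h; exact subset_rfl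
  | iatom r ts => intro ψ h; simp [sfA] at h; subst h; exact subset_rfl
  | neg φ ih =>
    intro ψ h
    simp only [sfA, Set.mem_insert_iff] at h
    rcases h with rfl | h
    · exact subset_rfl
    · exact (ih ψ h).trans (Set.subset_insert _ _)
  | and φ φ' ih ih' =>
    intro ψ h
    simp only [sfA, Set.mem_insert_iff, Set.mem_union] at h
    rcases h with rfl | h | h
    · exact subset_rfl
    · exact (ih ψ h).trans ((Set.subset_union_left).trans (Set.subset_insert _ _))
    · exact (ih' ψ h).trans ((Set.subset_union_right).trans (Set.subset_insert _ _))
  | next φ ih =>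
    intro ψ h
    simp only [sfA, Set.mem_insert_iff] at h
    rcases h with rfl | h
    · exact subset_rfl
    · exact (ih ψ h).trans (Set.subset_insert _ _)
  | until_ φ φ' ih ih' =>
    intro ψ h
    simp only [sfA, Set.mem_insert_iff, Set.mem_union] at h
    rcases h with rfl | h | h
    · exact subset_rfl
    · exact (ih ψ h).trans ((Set.subset_union_left).trans (Set.subset_insert _ _))
    · exact (ih' ψ h).trans ((Set.subset_union_right).trans (Set.subset_insert _ _))
  | forall_ p xs φ ih =>
    intro ψ h; simp [sfA] at h; subst h; exact subset_rfl

/-- Restricted subformulae have no larger quantifier depth. -/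
lemma depth_sfA : ∀ (φ ψ : FOForm s), ψ ∈ sfA φ → depthFO ψ ≤ depthFO φ := by
  intro φ
  induction φ with
  | tt => intro ψ h; simp [sfA] at h; subst h; exact le_rfl
  | uatom p ts => intro ψ h; simp [sfA] at h; subst h; exact le_rfl
  | iatom r ts => intro ψ h; simp [sfA] at h; subst h; exact le_rfl
  | neg φ ih =>
    intro ψ h
    simp only [sfA, Set.mem_insert_iff] at h
    rcases h with rfl | h
    · exact le_rfl
    · exact ih ψ h
  | and φ φ' ih ih' =>
    intro ψ h
    simp only [sfA, Set.mem_insert_iff, Set.mem_union] at h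
    rcases h with rfl | h | h
    · exact le_rfl
    · exact (ih ψ h).trans (le_max_left _ _)
    · exact (ih' ψ h).trans (le_max_right _ _)
  | next φ ih =>
    intro ψ h
    simp only [sfA, Set.mem_insert_iff] at h
    rcases h with rfl | h
    · exact le_rfl
    · exact ih ψ h
  | until_ φ φ' ih ih' =>
    intro ψ h
    simp only [sfA, Set.mem_insert_iff, Set.mem_union] at h
    rcases h with rfl | h | h
    · exact le_rfl
    · exact (ih ψ h).trans (le_max_left _ _)
    · exact (ih' ψ h).trans (le_max_right _ _)
  | forall_ p xs φ ih =>
    intro ψ h; simp [sfA] at h; subst h; exact le_rfl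

lemma sfA_sub_cl {φ : FOForm s} : sfA φ ⊆ cl φ := Set.subset_union_left

lemma neg_mem_cl {φ ψ : FOForm s} (h : ψ ∈ sfA φ) : FOForm.neg ψ ∈ cl φ :=
  Or.inr ⟨ψ, h, rfl⟩

/-- A non-negated formula in `cl φ` is in `sfA φ`. -/
lemma mem_sfA_of_cl {φ ψ : FOForm s} (h : ψ ∈ cl φ)
    (hψ : ∀ χ, ψ ≠ FOForm.neg χ) : ψ ∈ sfA φ := by
  rcases h with h | ⟨χ, _, he⟩
  · exact h
  · exact absurd he.symm (hψ χ)

lemma neg_mem_cl_elim {φ χ : FOForm s} (h : FOForm.neg χ ∈ cl φ) : χ ∈ sfA φ := by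
  rcases h with h | ⟨χ', hχ', he⟩
  · exact sfA_trans φ _ h (by simp [sfA, sfA_self])
  · cases he; exact hχ'

/-- Satisfaction in a shifted structure. -/
lemma sat_shift (M : TStruct s D) (i : ℕ) :
    ∀ (ψ : FOForm s) (v : ℕ → D) (j : ℕ),
      Sat (M.shift i) ψ v j ↔ Sat M ψ v (i + j) := by
  intro ψ
  induction ψ with
  | tt => intro v j; simp [Sat]
  | uatom p ts => intro v j; simp only [Sat]; exact Iff.rfl
  | iatom r ts => intro v j; simp only [Sat]; exact Iff.rfl
  | neg ψ ih => intro v j; simp only [Sat]; exact not_congr (ih v j)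
  | and ψ ψ' ih ih' => intro v j; simp only [Sat]; exact and_congr (ih v j) (ih' v j)
  | next ψ ih =>
    intro v j; simp only [Sat]
    rw [ih v (j + 1), show i + (j + 1) = i + j + 1 by omega]
  | until_ ψ ψ' ih ih' =>
    intro v j; simp only [Sat]
    constructor
    · rintro ⟨k, hk, hb, ha⟩
      refine ⟨i + k, by omega, (ih' v k).1 hb, fun l h1 h2 => ?_⟩
      have := (ih v (l - i)).1 (ha (l - i) (by omega) (by omega))
      rwa [show i + (l - i) = l by omega] at this
    · rintro ⟨k, hk, hb, ha⟩
      refine ⟨k - i, by omega, (ih' v (k - i)).2 (by rwa [show i + (k - i) = k by omega]),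
        fun l h1 h2 => (ih v l).2 (ha (i + l) (by omega) (by omega))⟩
  | forall_ p xs ψ ih =>
    intro v j; simp only [Sat]
    exact forall_congr' fun d => imp_congr Iff.rfl (ih _ j)

/-- One-step unfolding of the until operator. -/
lemma sat_until_unfold (M : TStruct s D) (a b : FOForm s) (v : ℕ → D) (i : ℕ) :
    Sat M (FOForm.until_ a b) v i ↔
      Sat M b v i ∨ (Sat M a v i ∧ Sat M (FOForm.until_ a b) v (i + 1)) := by
  simp only [Sat]
  constructor
  · rintro ⟨k, hik, hb, ha⟩
    rcases eq_or_lt_of_le hik with rfl | hlt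
    · exact Or.inl hb
    · exact Or.inr ⟨ha i le_rfl hlt,
        ⟨k, by omega, hb, fun j h1 h2 => ha j (by omega) h2⟩⟩
  · rintro (hb | ⟨ha, ⟨k, hik, hb, hrest⟩⟩)
    · exact ⟨i, le_rfl, hb, fun j h1 h2 => absurd h2 (by omega)⟩
    · refine ⟨k, by omega, hb, fun j h1 h2 => ?_⟩
      rcases eq_or_lt_of_le h1 with rfl | hlt
      · exact ha
      · exact hrest j (by omega) h2

/-- **Soundness of runs**: every restricted subformula in a state of a locally
accepting run holds at the corresponding position, provided quantified formulae
in the run are handled correctly (hypotheses `hfa`, `hnfa`). -/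
lemma run_sound {φ : FOForm s} {M : TStruct s D} {v : ℕ → D}
    {ρ : ℕ → Set (FOForm s)}
    (hrun : IsRun φ M v ρ) (hloc : LocallyAccepting φ ρ)
    (hfa : ∀ i p xs χ, FOForm.forall_ p xs χ ∈ ρ i →
      Sat M (FOForm.forall_ p xs χ) v i)
    (hnfa : ∀ i p xs χ, FOForm.neg (FOForm.forall_ p xs χ) ∈ ρ i →
      ¬ Sat M (FOForm.forall_ p xs χ) v i) :
    ∀ ψ, ψ ∈ sfA φ → ∀ i,
      (ψ ∈ ρ i → Sat M ψ v i) ∧ (FOForm.neg ψ ∈ ρ i → ¬ Sat M ψ v i) := by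
  obtain ⟨hC, hinit, hstep⟩ := hrun
  -- exactly one of ψ, ¬ψ in each state
  have xone : ∀ i (ψ : FOForm s), ψ ∈ sfA φ →
      ¬ (ψ ∈ ρ i ∧ FOForm.neg ψ ∈ ρ i) := fun i ψ h => ((hC i).2.1 ψ h).2
  have xor1 : ∀ i (ψ : FOForm s), ψ ∈ sfA φ →
      (ψ ∈ ρ i ∨ FOForm.neg ψ ∈ ρ i) := fun i ψ h => ((hC i).2.1 ψ h).1
  have hnegmem : ∀ i (ψ : FOForm s), ψ ∈ sfA φ → ψ ∉ ρ i → FOForm.neg ψ ∈ ρ i := by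
    intro i ψ h hn; rcases xor1 i ψ h with h' | h'
    · exact absurd h' hn
    · exact h'
  intro ψ
  induction ψ with
  | tt =>
    intro _ i
    refine ⟨fun _ => trivial, fun hm => absurd hm ((hstep i).1.1)⟩
  | uatom p ts =>
    intro _ i
    exact ⟨fun hm => (hstep i).1.2.1 p ts hm, fun hm => (hstep i).1.2.2.1 p ts hm⟩
  | iatom r ts =>
    intro _ i
    exact ⟨fun hm => (hstep i).1.2.2.2.1 r ts hm, fun hm => (hstep i).1.2.2.2.2 r ts hm⟩
  | neg χ ihχ =>
    intro h i
    have hχ : χ ∈ sfA φ := sfA_trans φ _ h (by simp [sfA, sfA_self])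
    refine ⟨fun hm => (ihχ hχ i).2 hm, fun hm => ?_⟩
    have h1 : FOForm.neg χ ∉ ρ i := fun h' => xone i _ h ⟨h', hm⟩
    have h2 : χ ∈ ρ i := by
      rcases xor1 i χ hχ with h' | h'
      · exact h'
      · exact absurd h' h1
    have := (ihχ hχ i).1 h2
    simpa [Sat] using this
  | and a b iha ihb =>
    intro h i
    have ha : a ∈ sfA φ := sfA_trans φ _ h (by simp [sfA, sfA_self])
    have hb : b ∈ sfA φ := sfA_trans φ _ h (by simp [sfA, sfA_self])
    have hcl : FOForm.and a b ∈ cl φ := sfA_sub_cl h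
    have hiff := (hC i).2.2.1 a b hcl
    refine ⟨fun hm => ?_, fun hm => ?_⟩
    · have := hiff.1 hm
      exact ⟨(iha ha i).1 this.1, (ihb hb i).1 this.2⟩
    · have h1 : FOForm.and a b ∉ ρ i := fun h' => xone i _ h ⟨h', hm⟩
      have h2 : ¬ (a ∈ ρ i ∧ b ∈ ρ i) := fun h' => h1 (hiff.2 h')
      simp only [Sat]
      intro hsat
      rcases not_and_or.1 h2 with h' | h'
      · exact (iha ha i).2 (hnegmem i a ha h') hsat.1
      · exact (ihb hb i).2 (hnegmem i b hb h') hsat.2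
  | next a iha =>
    intro h i
    have ha : a ∈ sfA φ := sfA_trans φ _ h (by simp [sfA, sfA_self])
    have hcl : FOForm.next a ∈ cl φ := sfA_sub_cl h
    have hx := (hstep i).2.1 a hcl
    refine ⟨fun hm => ?_, fun hm => ?_⟩
    · exact (iha ha (i + 1)).1 (hx.1 hm)
    · have h1 : FOForm.next a ∉ ρ i := fun h' => xone i _ h ⟨h', hm⟩
      have h2 : a ∉ ρ (i + 1) := fun h' => h1 (hx.2 h')
      have := (iha ha (i + 1)).2 (hnegmem _ a ha h2)
      simpa [Sat] using this
  | until_ a b iha ihb =>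
    intro h i
    have ha : a ∈ sfA φ := sfA_trans φ _ h (by simp [sfA, sfA_self])
    have hb : b ∈ sfA φ := sfA_trans φ _ h (by simp [sfA, sfA_self])
    have hcl : FOForm.until_ a b ∈ cl φ := sfA_sub_cl h
    have key : ∀ (m i : ℕ), FOForm.until_ a b ∈ ρ i →
        (b ∈ ρ (i + m) ∨ FOForm.neg (FOForm.until_ a b) ∈ ρ (i + m)) →
        ∃ k, i ≤ k ∧ b ∈ ρ k ∧ ∀ j, i ≤ j → j < k → a ∈ ρ j := by
      intro m
      induction m with
      | zero =>
        intro i hu hor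
        rcases hor with hb' | hn
        · exact ⟨i, le_rfl, hb', fun j h1 h2 => absurd h2 (by omega)⟩
        · exact absurd ⟨hu, hn⟩ (xone i _ h)
      | succ m ihm =>
        intro i hu hor
        rcases ((hstep i).2.2 a b hcl).1 hu with hb' | ⟨ha', hu'⟩
        · exact ⟨i, le_rfl, hb', fun j h1 h2 => absurd h2 (by omega)⟩
        · obtain ⟨k, hk, hbk, hak⟩ := ihm (i + 1) hu'
            (by rw [show i + 1 + m = i + (m + 1) by omega]; exact hor)
          refine ⟨k, by omega, hbk, fun j h1 h2 => ?_⟩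
          rcases eq_or_lt_of_le h1 with rfl | hlt
          · exact ha'
          · exact hak j (by omega) h2
    refine ⟨fun hm => ?_, fun hm => ?_⟩
    · obtain ⟨k0, hk0, hor⟩ := hloc a b hcl i
      obtain ⟨k, hik, hbk, haj⟩ := key (k0 - i) i hm
        (by rw [show i + (k0 - i) = k0 by omega]; exact hor)
      simp only [Sat]
      exact ⟨k, hik, (ihb hb k).1 hbk, fun j h1 h2 => (iha ha j).1 (haj j h1 h2)⟩
    · simp only [Sat]
      rintro ⟨k, hik, hbk, haj⟩
      have hbmem : b ∈ ρ k := by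
        rcases xor1 k b hb with h' | h'
        · exact h'
        · exact absurd hbk ((ihb hb k).2 h')
      have huk : FOForm.until_ a b ∈ ρ k :=
        ((hstep k).2.2 a b hcl).2 (Or.inl hbmem)
      have hu_at : ∀ m j, i ≤ j → j + m = k → FOForm.until_ a b ∈ ρ j := by
        intro m
        induction m with
        | zero =>
          intro j hj hjk
          have : j = k := by omega
          subst this; exact huk
        | succ m ihm =>
          intro j hj hjk
          have hu' := ihm (j + 1) (by omega) (by omega)
          have hsa : Sat M a v j := haj j hj (by omega)
          have hamem : a ∈ ρ j := by
            rcases xor1 j a ha with h' | h'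
            · exact h'
            · exact absurd hsa ((iha ha j).2 h')
          exact ((hstep j).2.2 a b hcl).2 (Or.inr ⟨hamem, hu'⟩)
      exact xone i _ h ⟨hu_at (k - i) i le_rfl (by omega), hm⟩
  | forall_ p xs χ _ =>
    intro _ i
    exact ⟨fun hm => hfa i p xs χ hm, fun hm => hnfa i p xs χ hm⟩

/-- The canonical run: at each position, the set of closure formulae true there. -/
def satRun (M : TStruct s D) (φ : FOForm s) (v : ℕ → D) : ℕ → Set (FOForm s) :=
  fun i => {ψ | ψ ∈ cl φ ∧ Sat M ψ v i}

/-- **Completeness of the canonical run**: if `φ` holds, `satRun` is a locally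
accepting run. -/
lemma run_complete {φ : FOForm s} {M : TStruct s D} {v : ℕ → D}
    (h : Sat M φ v 0) :
    IsRun φ M v (satRun M φ v) ∧ LocallyAccepting φ (satRun M φ v) := by
  have hnegSat : ∀ (ψ : FOForm s) (i : ℕ),
      Sat M (FOForm.neg ψ) v i ↔ ¬ Sat M ψ v i := fun ψ i => by simp [Sat]
  constructor
  · refine ⟨fun i => ?_, ⟨sfA_sub_cl (sfA_self φ), h⟩, fun i => ?_⟩
    · -- Complete
      refine ⟨fun ψ hψ => hψ.1, fun ψ hψ => ?_, fun a b hcl => ?_, fun a b hcl => ?_⟩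
      · constructor
        · by_cases hs : Sat M ψ v i
          · exact Or.inl ⟨sfA_sub_cl hψ, hs⟩
          · exact Or.inr ⟨neg_mem_cl hψ, (hnegSat ψ i).2 hs⟩
        · rintro ⟨⟨_, h1⟩, ⟨_, h2⟩⟩
          exact (hnegSat ψ i).1 h2 h1
      · -- and
        have hasfA : FOForm.and a b ∈ sfA φ := mem_sfA_of_cl hcl (by intro χ h'; cases h')
        have hacl : a ∈ cl φ := sfA_sub_cl (sfA_trans φ _ hasfA (by simp [sfA, sfA_self]))
        have hbcl : b ∈ cl φ := sfA_sub_cl (sfA_trans φ _ hasfA (by simp [sfA, sfA_self]))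
        constructor
        · rintro ⟨_, hs⟩
          have hs' : Sat M a v i ∧ Sat M b v i := hs
          exact ⟨⟨hacl, hs'.1⟩, ⟨hbcl, hs'.2⟩⟩
        · rintro ⟨⟨_, h1⟩, ⟨_, h2⟩⟩
          exact ⟨hcl, ⟨h1, h2⟩⟩
      · -- until local conditions
        have husfA : FOForm.until_ a b ∈ sfA φ := mem_sfA_of_cl hcl (by intro χ h'; cases h')
        have hacl : a ∈ cl φ := sfA_sub_cl (sfA_trans φ _ husfA (by simp [sfA, sfA_self]))
        have hbcl : b ∈ cl φ := sfA_sub_cl (sfA_trans φ _ husfA (by simp [sfA, sfA_self]))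
        constructor
        · rintro ⟨_, hs⟩
          obtain ⟨k, hik, hbk, haj⟩ := hs
          rcases eq_or_lt_of_le hik with rfl | hlt
          · exact Or.inl ⟨hbcl, hbk⟩
          · exact Or.inr ⟨hacl, haj i le_rfl hlt⟩
        · rintro hn ⟨_, h1⟩
          exact hn ⟨hcl, ⟨i, le_rfl, h1, fun j hj1 hj2 => absurd hj2 (by omega)⟩⟩
    · -- Step
      refine ⟨?_, fun a hcl => ?_, fun a b hcl => ?_⟩
      · -- AtomsOK
        refine ⟨?_, ?_, ?_, ?_, ?_⟩
        · rintro ⟨_, hs⟩; exact (hnegSat FOForm.tt i).1 hs trivial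
        · rintro p ts ⟨_, hs⟩; exact hs
        · rintro p ts ⟨_, hs⟩; exact (hnegSat _ i).1 hs
        · rintro r ts ⟨_, hs⟩; exact hs
        · rintro r ts ⟨_, hs⟩; exact (hnegSat _ i).1 hs
      · -- next
        have hasfA : FOForm.next a ∈ sfA φ := mem_sfA_of_cl hcl (by intro χ h'; cases h')
        have hacl : a ∈ cl φ := sfA_sub_cl (sfA_trans φ _ hasfA (by simp [sfA, sfA_self]))
        constructor
        · rintro ⟨_, hs⟩; exact ⟨hacl, hs⟩
        · rintro ⟨_, hs⟩; exact ⟨hcl, hs⟩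
      · -- until expansion
        have husfA : FOForm.until_ a b ∈ sfA φ := mem_sfA_of_cl hcl (by intro χ h'; cases h')
        have hacl : a ∈ cl φ := sfA_sub_cl (sfA_trans φ _ husfA (by simp [sfA, sfA_self]))
        have hbcl : b ∈ cl φ := sfA_sub_cl (sfA_trans φ _ husfA (by simp [sfA, sfA_self]))
        constructor
        · rintro ⟨_, hs⟩
          rcases (sat_until_unfold M a b v i).1 hs with h' | ⟨h1, h2⟩
          · exact Or.inl ⟨hbcl, h'⟩
          · exact Or.inr ⟨⟨hacl, h1⟩, ⟨hcl, h2⟩⟩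
        · rintro (⟨_, h'⟩ | ⟨⟨_, h1⟩, ⟨_, h2⟩⟩)
          · exact ⟨hcl, (sat_until_unfold M a b v i).2 (Or.inl h')⟩
          · exact ⟨hcl, (sat_until_unfold M a b v i).2 (Or.inr ⟨h1, h2⟩)⟩
  · -- LocallyAccepting
    intro a b hcl N
    have husfA : FOForm.until_ a b ∈ sfA φ := mem_sfA_of_cl hcl (by intro χ h'; cases h')
    have hbcl : b ∈ cl φ := sfA_sub_cl (sfA_trans φ _ husfA (by simp [sfA, sfA_self]))
    by_cases hsu : Sat M (FOForm.until_ a b) v N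
    · obtain ⟨k, hk, hbk, _⟩ := hsu
      exact ⟨k, hk, Or.inl ⟨hbcl, hbk⟩⟩
    · exact ⟨N, le_rfl, Or.inr ⟨neg_mem_cl husfA, (hnegSat _ N).2 hsu⟩⟩

/-- Main correctness lemma, by induction on the automaton level. -/
lemma main_aux : ∀ (n : ℕ) (φ : FOForm s), depthFO φ ≤ n →
    ∀ (M : TStruct s D) (v : ℕ → D),
      ((∃ ρ, AcceptingAux n M φ v ρ) ↔ Sat M φ v 0) := by
  intro n
  induction n with
  | zero =>
    intro φ hd M v
    constructor
    · rintro ⟨ρ, hrun, hloc⟩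
      have hfa : ∀ i p xs χ, FOForm.forall_ p xs χ ∈ ρ i →
          Sat M (FOForm.forall_ p xs χ) v i := by
        intro i p xs χ hm
        have h1 : FOForm.forall_ p xs χ ∈ cl φ := (hrun.1 i).1 hm
        have h2 : FOForm.forall_ p xs χ ∈ sfA φ :=
          mem_sfA_of_cl h1 (by intro χ' h'; cases h')
        have := depth_sfA φ _ h2
        simp [depthFO] at this
        omega
      have hnfa : ∀ i p xs χ, FOForm.neg (FOForm.forall_ p xs χ) ∈ ρ i →
          ¬ Sat M (FOForm.forall_ p xs χ) v i := by
        intro i p xs χ hm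
        have h1 : FOForm.neg (FOForm.forall_ p xs χ) ∈ cl φ := (hrun.1 i).1 hm
        have h2 : FOForm.forall_ p xs χ ∈ sfA φ := neg_mem_cl_elim h1
        have := depth_sfA φ _ h2
        simp [depthFO] at this
        omega
      exact (run_sound hrun hloc hfa hnfa φ (sfA_self φ) 0).1 hrun.2.1
    · intro hsat
      exact ⟨satRun M φ v, run_complete hsat⟩
  | succ n IH =>
    intro φ hd M v
    constructor
    · rintro ⟨ρ, hrun, hloc, hsp⟩
      have hdep : ∀ (p : s.UPred) xs χ, FOForm.forall_ p xs χ ∈ sfA φ →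
          depthFO χ ≤ n := by
        intro p xs χ h2
        have := depth_sfA φ _ h2
        simp [depthFO] at this
        omega
      have hfa : ∀ i p xs χ, FOForm.forall_ p xs χ ∈ ρ i →
          Sat M (FOForm.forall_ p xs χ) v i := by
        intro i p xs χ hm
        have h2 : FOForm.forall_ p xs χ ∈ sfA φ :=
          mem_sfA_of_cl ((hrun.1 i).1 hm) (by intro χ' h'; cases h')
        simp only [Sat]
        intro d hd'
        obtain ⟨ρ', hρ'⟩ := (hsp i).1 p xs χ hm d hd'
        have := (IH χ (hdep p xs χ h2) (M.shift i) (updVec v xs d)).1 ⟨ρ', hρ'⟩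
        have := (sat_shift M i χ (updVec v xs d) 0).1 this
        simpa using this
      have hnfa : ∀ i p xs χ, FOForm.neg (FOForm.forall_ p xs χ) ∈ ρ i →
          ¬ Sat M (FOForm.forall_ p xs χ) v i := by
        intro i p xs χ hm
        have h2 : FOForm.forall_ p xs χ ∈ sfA φ := neg_mem_cl_elim ((hrun.1 i).1 hm)
        obtain ⟨d, hd', ρ', hρ'⟩ := (hsp i).2 p xs χ hm
        have hdn : depthFO (FOForm.neg χ) ≤ n := hdep p xs χ h2
        have := (IH (FOForm.neg χ) hdn (M.shift i) (updVec v xs d)).1 ⟨ρ', hρ'⟩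
        have := (sat_shift M i (FOForm.neg χ) (updVec v xs d) 0).1 this
        have hthis : ¬ Sat M χ (updVec v xs d) i := by simpa [Sat] using this
        simp only [Sat]
        intro hall
        exact hthis (hall d hd')
      exact (run_sound hrun hloc hfa hnfa φ (sfA_self φ) 0).1 hrun.2.1
    · intro hsat
      obtain ⟨hrun, hloc⟩ := run_complete (φ := φ) (M := M) (v := v) hsat
      refine ⟨satRun M φ v, hrun, hloc, fun i => ⟨?_, ?_⟩⟩
      · rintro p xs χ ⟨hmcl, hms⟩ d hd'
        have h2 : FOForm.forall_ p xs χ ∈ sfA φ :=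
          mem_sfA_of_cl hmcl (by intro χ' h'; cases h')
        have hdep : depthFO χ ≤ n := by
          have := depth_sfA φ _ h2
          simp [depthFO] at this
          omega
        have hs : Sat M χ (updVec v xs d) i := hms d hd'
        have : Sat (M.shift i) χ (updVec v xs d) 0 := by
          rw [sat_shift M i χ (updVec v xs d) 0]
          simpa using hs
        exact (IH χ hdep (M.shift i) (updVec v xs d)).2 this
      · rintro p xs χ ⟨hmcl, hms⟩
        have h2 : FOForm.forall_ p xs χ ∈ sfA φ := neg_mem_cl_elim hmcl
        have hdep : depthFO (FOForm.neg χ) ≤ n := by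
          have := depth_sfA φ _ h2
          simp [depthFO] at this
          simp [depthFO]
          omega
        have hms' : ¬ Sat M (FOForm.forall_ p xs χ) v i := hms
        simp only [Sat, not_forall] at hms'
        obtain ⟨d, hd', hns⟩ := hms'
        refine ⟨d, hd', ?_⟩
        have : Sat (M.shift i) (FOForm.neg χ) (updVec v xs d) 0 := by
          rw [sat_shift M i (FOForm.neg χ) (updVec v xs d) 0]
          simpa [Sat] using hns
        exact (IH (FOForm.neg χ) hdep (M.shift i) (updVec v xs d)).2 this

end Aux

/-- Correctness of the spawning automaton construction: for every
LTL^FO sentence `φ`, `L(A_φ) = L(φ)`, i.e. the constructed spawning automaton `A_φ`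
has an accepting run over a first-order temporal structure `(𝔄̄, w)` (with `w` an
infinite trace of events) iff `(𝔄̄, w) ⊨ φ`. -/
theorem spawning_automaton_correct {s : Sig} {D : Type}
    (φ : FOForm s) (hφ : FOForm.Closed φ)
    (M : TStruct s D) (v : ℕ → D) :
    (∃ ρ : ℕ → Set (FOForm s), Accepting M φ v ρ) ↔ Sat M φ v 0 :=
  main_aux (depthFO φ) φ le_rfl M v

end LTLFO
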